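/- Let K be an algebraically closed field and V a 2-dimensional K-vector space. For every 2-dimensional subspace S of V⊗V there exists a basis x, y of V such that S equals the span of one of the following pairs: {xx, yy}; {xx − yx, yy}; {xy, yy}; {yx, yy}; {xy − α yx, yy} with α ∈ Kˣ; {xy, yx}; {xx − xy, yx}; {xx − a·xy − yy, yx} with a ∈ K and a² + 1 ≠ 0 (here uv abbreviates u⊗v). -/

import Mathlib

open Module TensorProduct

section helpers
variable {K : Type*} [Field K] {M : Type*} [AddCommGroup M] [Module K M]

/-- change of generators of a span of a pair, invertible matrix -/
lemma span_pair_change (A B G1 G2 : M) (c1 c2 c3 c4 : K)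
    (h1 : G1 = c1 • A + c2 • B) (h2 : G2 = c3 • A + c4 • B)
    (hD : c1 * c4 - c2 * c3 ≠ 0) :
    Submodule.span K {A, B} = Submodule.span K {G1, G2} := by
  apply le_antisymm
  · rw [Submodule.span_le]
    rintro z (rfl | rfl)
    · rw [SetLike.mem_coe, Submodule.mem_span_pair]
      exact ⟨c4 / (c1*c4 - c2*c3), -c2 / (c1*c4 - c2*c3), by
        rw [h1, h2]; match_scalars <;> (generalize hX : c1*c4 - c2*c3 = X at *) <;> field_simp <;>
          first | ring1 | linear_combination hX⟩
    · rw [SetLike.mem_coe, Submodule.mem_span_pair]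
      exact ⟨-c3 / (c1*c4 - c2*c3), c1 / (c1*c4 - c2*c3), by
        rw [h1, h2]; match_scalars <;> (generalize hX : c1*c4 - c2*c3 = X at *) <;> field_simp <;>
          first | ring1 | linear_combination hX⟩
  · rw [Submodule.span_le]
    rintro z (rfl | rfl)
    · exact Submodule.mem_span_pair.2 ⟨c1, c2, h1.symm⟩
    · exact Submodule.mem_span_pair.2 ⟨c3, c4, h2.symm⟩

lemma span_le_singleton_of_dep (A B : M) (c : K) (hA : A = c • B) :
    Submodule.span K {A, B} ≤ Submodule.span K {B} := by
  rw [Submodule.span_le]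
  rintro z (rfl | rfl)
  · rw [SetLike.mem_coe, Submodule.mem_span_singleton]; exact ⟨c, hA.symm⟩
  · exact Submodule.mem_span_singleton_self _

lemma indep_of_span_finrank [FiniteDimensional K M] (A B : M) (S : Submodule K M)
    (h : S = Submodule.span K {A, B}) (hS : finrank K S = 2) :
    LinearIndependent K ![A, B] := by
  by_contra hcon
  rw [Fintype.not_linearIndependent_iff] at hcon
  obtain ⟨g, hg, i, hi⟩ := hcon
  rw [Fin.sum_univ_two] at hg
  simp only [Matrix.cons_val_zero, Matrix.cons_val_one, Matrix.head_cons] at hg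
  have hle : ∃ C : M, S ≤ Submodule.span K {C} := by
    rcases eq_or_ne (g 0) 0 with h0 | h0
    · have h1 : g 1 ≠ 0 := by
        fin_cases i
        · exact absurd h0 hi
        · exact hi
      have hB : B = (0 : K) • A := by
        rw [h0, zero_smul, zero_add] at hg
        rw [zero_smul]
        exact smul_eq_zero_iff_right h1 |>.mp hg
      refine ⟨A, ?_⟩
      rw [h, Set.pair_comm]
      exact span_le_singleton_of_dep B A 0 hB
    · have hA : A = (-(g 0)⁻¹ * g 1) • B := by
        have h2 : g 0 • A = -(g 1 • B) := eq_neg_of_add_eq_zero_left hg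
        have h3 : (g 0)⁻¹ • (g 0 • A) = (g 0)⁻¹ • -(g 1 • B) := by rw [h2]
        rw [smul_smul, inv_mul_cancel₀ h0, one_smul] at h3
        rw [h3]; match_scalars; ring
      exact ⟨B, h ▸ span_le_singleton_of_dep A B _ hA⟩
  obtain ⟨C, hC⟩ := hle
  have h1 : finrank K S ≤ 1 := by
    rcases eq_or_ne C 0 with rfl | hC0
    · have hb : S = ⊥ := le_bot_iff.mp (by rwa [Submodule.span_zero_singleton] at hC)
      rw [hb, finrank_bot]; omega
    · calc finrank K S ≤ finrank K (Submodule.span K {C}) := Submodule.finrank_mono hC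
        _ = 1 := finrank_span_singleton hC0
  omega

end helpers

section helpers2
variable {K : Type*} [Field K] {V : Type*} [AddCommGroup V] [Module K V]

/-- independence of a pair of combinations of an independent pair -/
lemma indep_combo (x y : V) (hxy : LinearIndependent K ![x, y])
    (p q r s : K) (h : p * s - q * r ≠ 0) :
    LinearIndependent K ![p • x + q • y, r • x + s • y] := by
  rw [Fintype.linearIndependent_iff]
  intro g hg
  rw [Fin.sum_univ_two] at hg
  simp only [Matrix.cons_val_zero, Matrix.cons_val_one, Matrix.head_cons] at hg
  have hg' : (g 0 * p + g 1 * r) • x + (g 0 * q + g 1 * s) • y = 0 := by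
    rw [← hg]; match_scalars <;> ring
  have h2 := (Fintype.linearIndependent_iff.mp hxy) ![g 0 * p + g 1 * r, g 0 * q + g 1 * s]
    (by rw [Fin.sum_univ_two]; simpa using hg')
  have e1 : g 0 * p + g 1 * r = 0 := h2 0
  have e2 : g 0 * q + g 1 * s = 0 := h2 1
  intro i
  fin_cases i
  · have : g 0 * (p * s - q * r) = 0 := by linear_combination s * e1 - r * e2
    exact (mul_eq_zero.mp this).resolve_right h
  · have : g 1 * (p * s - q * r) = 0 := by linear_combination -q * e1 + p * e2
    exact (mul_eq_zero.mp this).resolve_right h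

variable [FiniteDimensional K V]

/-- decomposition of tensors w.r.t. a 2-element independent family -/
lemma tensor_decomp (hV : finrank K V = 2) (x y : V) (hxy : LinearIndependent K ![x, y])
    (z : V ⊗[K] V) :
    ∃ a b c d : K, z = a • (x ⊗ₜ[K] x) + b • (x ⊗ₜ[K] y) + c • (y ⊗ₜ[K] x) + d • (y ⊗ₜ[K] y) := by
  let f : Basis (Fin 2) K V := basisOfLinearIndependentOfCardEqFinrank hxy (by simp [hV])
  have hf : ∀ i, f i = ![x, y] i := fun i => by
    rw [coe_basisOfLinearIndependentOfCardEqFinrank]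
  have hf0 : f 0 = x := hf 0
  have hf1 : f 1 = y := hf 1
  let T := Basis.tensorProduct f f
  have := T.sum_repr z
  rw [Fintype.sum_prod_type] at this
  refine ⟨T.repr z (0,0), T.repr z (0,1), T.repr z (1,0), T.repr z (1,1), ?_⟩
  conv_lhs => rw [← this]
  rw [Fin.sum_univ_two, Fin.sum_univ_two, Fin.sum_univ_two]
  simp only [T, Basis.tensorProduct_apply, hf0, hf1]
  module

end helpers2

section helpers3
variable {K : Type*} [Field K] [IsAlgClosed K]

lemma quad_root (P Q R : K) (hP : P ≠ 0) : ∃ s : K, P * s^2 + Q * s + R = 0 := by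
  obtain ⟨s, hs⟩ := IsAlgClosed.exists_root
    (Polynomial.C P * Polynomial.X ^ 2 + Polynomial.C Q * Polynomial.X + Polynomial.C R)
    (by rw [Polynomial.degree_quadratic hP]; exact (by norm_num))
  refine ⟨s, ?_⟩
  have := hs
  simp only [Polynomial.IsRoot, Polynomial.eval_add, Polynomial.eval_mul, Polynomial.eval_pow,
    Polynomial.eval_C, Polynomial.eval_X] at this
  linear_combination this
end helpers3

section main
variable {K : Type*} [Field K] [IsAlgClosed K] {V : Type*} [AddCommGroup V]
  [Module K V] [FiniteDimensional K V]

/-- the conclusion of the classification theorem -/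
def Concl (K : Type*) [Field K] (V : Type*) [AddCommGroup V] [Module K V]
    (S : Submodule K (V ⊗[K] V)) : Prop :=
  ∃ x y : V, LinearIndependent K ![x, y] ∧
      (S = Submodule.span K {x ⊗ₜ[K] x, y ⊗ₜ[K] y} ∨
       S = Submodule.span K {x ⊗ₜ[K] x - y ⊗ₜ[K] x, y ⊗ₜ[K] y} ∨
       S = Submodule.span K {x ⊗ₜ[K] y, y ⊗ₜ[K] y} ∨
       S = Submodule.span K {y ⊗ₜ[K] x, y ⊗ₜ[K] y} ∨
       (∃ α : K, α ≠ 0 ∧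
         S = Submodule.span K {x ⊗ₜ[K] y - α • (y ⊗ₜ[K] x), y ⊗ₜ[K] y}) ∨
       S = Submodule.span K {x ⊗ₜ[K] y, y ⊗ₜ[K] x} ∨
       S = Submodule.span K {x ⊗ₜ[K] x - x ⊗ₜ[K] y, y ⊗ₜ[K] x} ∨
       (∃ a : K, a ^ 2 + 1 ≠ 0 ∧
         S = Submodule.span K {x ⊗ₜ[K] x - a • (x ⊗ₜ[K] y) - y ⊗ₜ[K] y, y ⊗ₜ[K] x}))

/-- Case A : S contains the square y ⊗ y of a basis vector. -/
lemma caseA (hV : finrank K V = 2) (x y : V) (hxy : LinearIndependent K ![x, y])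
    (B : V ⊗[K] V) (S : Submodule K (V ⊗[K] V))
    (hspan : S = Submodule.span K {y ⊗ₜ[K] y, B}) (hS : finrank K S = 2) :
    Concl K V S := by
  obtain ⟨a, b, c, d, hB⟩ := tensor_decomp hV x y hxy B
  set B' : V ⊗[K] V := B - d • (y ⊗ₜ[K] y) with hB'def
  have hB' : B' = a • (x ⊗ₜ[K] x) + b • (x ⊗ₜ[K] y) + c • (y ⊗ₜ[K] x) := by
    rw [hB'def, hB]; module
  have hspan' : S = Submodule.span K {y ⊗ₜ[K] y, B'} := by
    rw [hspan]
    exact span_pair_change _ _ _ _ (1:K) 0 (-d) 1 (by module) (by rw [hB'def]; module)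
      (by norm_num)
  have hindep : LinearIndependent K ![y ⊗ₜ[K] y, B'] :=
    indep_of_span_finrank _ _ S hspan' hS
  have habc : ¬(a = 0 ∧ b = 0 ∧ c = 0) := by
    rintro ⟨rfl, rfl, rfl⟩
    rw [Fintype.linearIndependent_iff] at hindep
    have := hindep ![0, 1] (by
      rw [Fin.sum_univ_two]
      simp only [Matrix.cons_val_zero, Matrix.cons_val_one, Matrix.head_cons]
      rw [hB']; module) 1
    simp at this
  by_cases ha : a = 0
  · subst ha
    by_cases hb : b = 0
    · -- c ≠ 0 : form 4
      subst hb
      have hc : c ≠ 0 := by tauto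
      refine ⟨x, y, hxy, Or.inr (Or.inr (Or.inr (Or.inl ?_)))⟩
      rw [hspan']
      exact span_pair_change _ _ _ _ (0:K) c⁻¹ 1 0
        (by rw [hB']; match_scalars <;> field_simp <;> simp) (by module)
        (by simpa using inv_ne_zero hc)
    · by_cases hc : c = 0
      · -- form 3
        subst hc
        refine ⟨x, y, hxy, Or.inr (Or.inr (Or.inl ?_))⟩
        rw [hspan']
        exact span_pair_change _ _ _ _ (0:K) b⁻¹ 1 0
          (by rw [hB']; match_scalars <;> field_simp <;> simp) (by module)
          (by simpa using inv_ne_zero hb)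
      · -- form 5 with α = -c/b, x scaled by b
        refine ⟨b • x, y,
          (by have := indep_combo x y hxy b 0 0 1 (by simpa using hb); simpa using this),
          Or.inr (Or.inr (Or.inr (Or.inr (Or.inl ⟨-c/b,
            div_ne_zero (neg_ne_zero.mpr hc) hb, ?_⟩))))⟩
        rw [hspan']
        refine span_pair_change _ _ _ _ (0:K) 1 1 0 ?_ (by module) (by norm_num)
        rw [hB']
        simp only [TensorProduct.smul_tmul, TensorProduct.tmul_smul, TensorProduct.tmul_smul]
        match_scalars <;> field_simp
  · by_cases hcb : c = b
    · -- form 1 with X = a•x + b•y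
      subst hcb
      refine ⟨a • x + c • y, y,
        (by have := indep_combo x y hxy a c 0 1 (by simpa using ha); simpa using this),
        Or.inl ?_⟩
      rw [hspan']
      refine span_pair_change _ _ _ _ ((c*c : K)) a 1 0 ?_ (by module) (by simpa using ha)
      rw [hB']
      simp only [TensorProduct.add_tmul, TensorProduct.tmul_add, TensorProduct.smul_tmul,
        TensorProduct.tmul_smul, TensorProduct.tmul_smul]
      module
    · -- form 2 with X = a•x + b•y, Y = (b-c)•y
      have hbc : b - c ≠ 0 := sub_ne_zero.mpr (Ne.symm hcb)
      refine ⟨a • x + b • y, (b - c) • y,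
        (by have := indep_combo x y hxy a b 0 (b-c) (by simpa using mul_ne_zero ha hbc)
            simpa using this),
        Or.inr (Or.inl ?_)⟩
      rw [hspan']
      refine span_pair_change _ _ _ _ ((c*b : K)) a ((b-c)^2) 0 ?_ ?_
        (by have h1 : a*(b-c)^2 ≠ 0 := mul_ne_zero ha (pow_ne_zero _ hbc)
            intro h; apply h1; linear_combination -h)
      · rw [hB']
        simp only [TensorProduct.add_tmul, TensorProduct.tmul_add, TensorProduct.smul_tmul,
          TensorProduct.tmul_smul, TensorProduct.tmul_smul]
        module
      · simp only [TensorProduct.add_tmul, TensorProduct.tmul_add, TensorProduct.smul_tmul,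
          TensorProduct.tmul_smul, TensorProduct.tmul_smul]
        module

set_option maxHeartbeats 1000000 in
/-- Case B : S contains y ⊗ x for a basis pair x, y. -/
lemma caseB (hV : finrank K V = 2) (x y : V) (hxy : LinearIndependent K ![x, y])
    (B : V ⊗[K] V) (S : Submodule K (V ⊗[K] V))
    (hspan : S = Submodule.span K {y ⊗ₜ[K] x, B}) (hS : finrank K S = 2) :
    Concl K V S := by
  obtain ⟨a, b, c, d, hB⟩ := tensor_decomp hV x y hxy B
  set B' : V ⊗[K] V := B - c • (y ⊗ₜ[K] x) with hB'def
  have hB' : B' = a • (x ⊗ₜ[K] x) + b • (x ⊗ₜ[K] y) + d • (y ⊗ₜ[K] y) := by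
    rw [hB'def, hB]; module
  have hspan' : S = Submodule.span K {y ⊗ₜ[K] x, B'} := by
    rw [hspan]
    exact span_pair_change _ _ _ _ (1:K) 0 (-c) 1 (by module) (by rw [hB'def]; module)
      (by norm_num)
  have hindep : LinearIndependent K ![y ⊗ₜ[K] x, B'] :=
    indep_of_span_finrank _ _ S hspan' hS
  have habd : ¬(a = 0 ∧ b = 0 ∧ d = 0) := by
    rintro ⟨rfl, rfl, rfl⟩
    rw [Fintype.linearIndependent_iff] at hindep
    have := hindep ![0, 1] (by
      rw [Fin.sum_univ_two]
      simp only [Matrix.cons_val_zero, Matrix.cons_val_one, Matrix.head_cons]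
      rw [hB']; module) 1
    simp at this
  by_cases ha : a = 0
  · subst ha
    by_cases hb : b = 0
    · -- form 4
      subst hb
      have hd : d ≠ 0 := by tauto
      refine ⟨x, y, hxy, Or.inr (Or.inr (Or.inr (Or.inl ?_)))⟩
      rw [hspan']
      exact span_pair_change _ _ _ _ (1:K) 0 0 d⁻¹
        (by module) (by rw [hB']; match_scalars <;> field_simp <;> simp)
        (by simpa using inv_ne_zero hd)
    · by_cases hd : d = 0
      · -- form 6
        subst hd
        refine ⟨x, y, hxy, Or.inr (Or.inr (Or.inr (Or.inr (Or.inr (Or.inl ?_)))))⟩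
        rw [hspan']
        exact span_pair_change _ _ _ _ (0:K) b⁻¹ 1 0
          (by rw [hB']; match_scalars <;> field_simp <;> simp) (by module)
          (by simpa using inv_ne_zero hb)
      · -- form 7 with X = (-d)•y, Y = (-b)•x + (-d)•y
        refine ⟨(-d) • y, (-b) • x + (-d) • y,
          (by have := indep_combo x y hxy 0 (-d) (-b) (-d)
                (by simpa using mul_ne_zero hd hb)
              simpa using this),
          Or.inr (Or.inr (Or.inr (Or.inr (Or.inr (Or.inr (Or.inl ?_))))))⟩
        rw [hspan']
        refine span_pair_change _ _ _ _ (-(d*b) : K) 0 0 d ?_ ?_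
          (by intro h; apply mul_ne_zero (mul_ne_zero hd hd) hb; linear_combination -h)
        · simp only [TensorProduct.add_tmul, TensorProduct.tmul_add, TensorProduct.smul_tmul,
            TensorProduct.tmul_smul]
          module
        · rw [hB']
          simp only [TensorProduct.add_tmul, TensorProduct.tmul_add, TensorProduct.smul_tmul,
            TensorProduct.tmul_smul]
          module
  · by_cases hb : b = 0
    · subst hb
      by_cases hd : d = 0
      · -- form 3 with (y, x)
        subst hd
        refine ⟨y, x,
          (by have := indep_combo x y hxy 0 1 1 0 (by norm_num); simpa using this),
          Or.inr (Or.inr (Or.inl ?_))⟩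
        rw [hspan']
        exact span_pair_change _ _ _ _ (1:K) 0 0 a⁻¹
          (by module) (by rw [hB']; match_scalars <;> field_simp <;> simp)
          (by simpa using inv_ne_zero ha)
      · -- form 8 with a'' = 0, Y = μ•y, μ² = -d/a
        obtain ⟨μ, hμ⟩ := IsAlgClosed.exists_pow_nat_eq (-d/a) (n := 2) (by norm_num)
        have hμ0 : μ ≠ 0 := by
          intro h; rw [h] at hμ
          have : -d/a = 0 := by rw [← hμ]; ring
          rw [div_eq_zero_iff] at this
          rcases this with h' | h'
          · exact hd (neg_eq_zero.mp h')
          · exact ha h'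
        refine ⟨x, μ • y,
          (by have := indep_combo x y hxy 1 0 0 μ (by simpa using hμ0); simpa using this),
          Or.inr (Or.inr (Or.inr (Or.inr (Or.inr (Or.inr (Or.inr ⟨0, by norm_num, ?_⟩))))))⟩
        rw [hspan']
        refine span_pair_change _ _ _ _ (0:K) a⁻¹ μ 0 ?_ ?_
          (by have := mul_ne_zero (inv_ne_zero ha) hμ0; intro h; apply this
              linear_combination -h)
        · have hμ' : μ^2 * a = -d := by
            rw [hμ]; field_simp
          rw [hB']
          simp only [TensorProduct.add_tmul, TensorProduct.tmul_add, TensorProduct.smul_tmul,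
            TensorProduct.tmul_smul]
          match_scalars <;> field_simp [ha] <;> first | ring1 | linear_combination -hμ'
        · simp only [TensorProduct.add_tmul, TensorProduct.tmul_add, TensorProduct.smul_tmul,
            TensorProduct.tmul_smul]
          module
    · by_cases hd : d = 0
      · -- form 7 with X = a•x, Y = (-b)•y
        subst hd
        refine ⟨a • x, (-b) • y,
          (by have := indep_combo x y hxy a 0 0 (-b)
                (by simpa using mul_ne_zero ha hb)
              simpa using this),
          Or.inr (Or.inr (Or.inr (Or.inr (Or.inr (Or.inr (Or.inl ?_))))))⟩
        rw [hspan']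
        refine span_pair_change _ _ _ _ (0:K) a (-(a*b)) 0 ?_ ?_
          (by intro h; apply mul_ne_zero (mul_ne_zero ha ha) hb; linear_combination h)
        · rw [hB']
          simp only [TensorProduct.add_tmul, TensorProduct.tmul_add, TensorProduct.smul_tmul,
            TensorProduct.tmul_smul]
          module
        · simp only [TensorProduct.add_tmul, TensorProduct.tmul_add, TensorProduct.smul_tmul,
            TensorProduct.tmul_smul]
          module
      · by_cases hbad : b * b = a * d
        · -- S contains the square (a•x + b•y)⊗(a•x + b•y) : reduce to case A
          have hsq : S = Submodule.span K
              {(a • x + b • y) ⊗ₜ[K] (a • x + b • y), y ⊗ₜ[K] x} := by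
            rw [hspan']
            refine span_pair_change _ _ _ _ ((a*b : K)) a 1 0 ?_ (by module)
              (by intro h; apply ha; linear_combination -h)
            rw [hB']
            simp only [TensorProduct.add_tmul, TensorProduct.tmul_add, TensorProduct.smul_tmul,
              TensorProduct.tmul_smul]
            match_scalars <;> first | ring1 | linear_combination hbad | linear_combination -hbad
          exact caseA hV y (a • x + b • y)
            (by have := indep_combo x y hxy 0 1 a b
                  (by intro h; apply ha; linear_combination -h)
                simpa using this)
            (y ⊗ₜ[K] x) S hsq hS
        · -- generic form 8
          obtain ⟨μ, hμ⟩ := IsAlgClosed.exists_pow_nat_eq (-a/d) (n := 2) (by norm_num)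
          have hμ0 : μ ≠ 0 := by
            intro h; rw [h] at hμ
            have h2 : -a/d = 0 := by rw [← hμ]; ring
            rw [div_eq_zero_iff] at h2
            rcases h2 with h' | h'
            · exact ha (neg_eq_zero.mp h')
            · exact hd h'
          have hμ' : μ^2 * d = -a := by rw [hμ]; field_simp
          have hsub : b * b - a * d ≠ 0 := sub_ne_zero.mpr hbad
          refine ⟨a • x + b • y, (μ*b) • x + (μ*d) • y,
            (by have := indep_combo x y hxy a b (μ*b) (μ*d)
                  (by intro h; apply mul_ne_zero hμ0 (sub_ne_zero.mpr (Ne.symm hbad))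
                      linear_combination h)
                simpa using this),
            Or.inr (Or.inr (Or.inr (Or.inr (Or.inr (Or.inr (Or.inr
              ⟨b/(μ*d), ?_, ?_⟩))))))⟩
          · intro h
            apply hsub
            have h2 : b^2 + μ^2*d^2 = 0 := by
              field_simp at h
              first | linear_combination h | linear_combination -h
            linear_combination h2 - d*hμ'
          · rw [hspan']
            refine span_pair_change _ _ _ _ ((2*a*b - b^3/d : K)) a (μ*a*d) (μ*b) ?_ ?_
              (by intro h
                  apply mul_ne_zero hμ0 (pow_ne_zero 2 hsub)
                  have h3 : ((2*a*b - b^3/d) * (μ*b) - a * (μ*a*d)) * d = 0 :=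
                    mul_eq_zero_of_left h d
                  field_simp at h3
                  first | linear_combination h3 | linear_combination -h3)
            · rw [hB']
              simp only [TensorProduct.add_tmul, TensorProduct.tmul_add, TensorProduct.smul_tmul,
                TensorProduct.tmul_smul]
              match_scalars <;> field_simp [hμ0, hd] <;>
                first
                  | ring1
                  | linear_combination (-(μ*b^2:K)) * hμ'
                  | linear_combination (-(b*μ*d^2:K)) * hμ'
                  | linear_combination (-(b*μ*d:K)) * hμ'
                  | linear_combination (-(μ*d^2:K)) * hμ'
                  | linear_combination (-b^2:K) * hμ'
                  | linear_combination (-d:K) * hμ'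
                  | linear_combination -hμ'
            · rw [hB']
              simp only [TensorProduct.add_tmul, TensorProduct.tmul_add, TensorProduct.smul_tmul,
                TensorProduct.tmul_smul]
              match_scalars <;> field_simp [hμ0, hd] <;>
                first
                  | ring1
                  | linear_combination (-(μ*b^2:K)) * hμ'
                  | linear_combination (-(b*μ*d^2:K)) * hμ'
                  | linear_combination (-(b*μ*d:K)) * hμ'
                  | linear_combination (-(μ*d^2:K)) * hμ'

end main

section glue
variable {K : Type*} [Field K] [IsAlgClosed K] {V : Type*} [AddCommGroup V]
  [Module K V] [FiniteDimensional K V]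

lemma rank_one_factor (x y : V) (a b c d : K) (hdet : a * d = b * c)
    (z : V ⊗[K] V)
    (hz : z = a • (x ⊗ₜ[K] x) + b • (x ⊗ₜ[K] y) + c • (y ⊗ₜ[K] x) + d • (y ⊗ₜ[K] y)) :
    (∃ p q r s : K, (p ≠ 0 ∨ q ≠ 0) ∧ (r ≠ 0 ∨ s ≠ 0) ∧
      z = (p • x + q • y) ⊗ₜ[K] (r • x + s • y)) ∨ z = 0 := by
  by_cases ha : a = 0
  · by_cases hb : b = 0
    · by_cases hc : c = 0
      · by_cases hd : d = 0
        · right; rw [hz, ha, hb, hc, hd]; module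
        · left
          refine ⟨0, d, 0, 1, Or.inr hd, Or.inr one_ne_zero, ?_⟩
          rw [hz, ha, hb, hc]
          simp only [TensorProduct.add_tmul, TensorProduct.tmul_add, TensorProduct.smul_tmul,
            TensorProduct.tmul_smul]
          module
      · left
        refine ⟨0, 1, c, d, Or.inr one_ne_zero, Or.inl hc, ?_⟩
        rw [hz, ha, hb]
        simp only [TensorProduct.add_tmul, TensorProduct.tmul_add, TensorProduct.smul_tmul,
          TensorProduct.tmul_smul]
        module
    · have hc : c = 0 := by
        rcases mul_eq_zero.mp (by rw [← hdet, ha, zero_mul]) with h | h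
        · exact absurd h hb
        · exact h
      left
      refine ⟨b, d, 0, 1, Or.inl hb, Or.inr one_ne_zero, ?_⟩
      rw [hz, ha, hc]
      simp only [TensorProduct.add_tmul, TensorProduct.tmul_add, TensorProduct.smul_tmul,
        TensorProduct.tmul_smul]
      module
  · left
    refine ⟨a, c, 1, b/a, Or.inl ha, Or.inl one_ne_zero, ?_⟩
    rw [hz]
    simp only [TensorProduct.add_tmul, TensorProduct.tmul_add, TensorProduct.smul_tmul,
      TensorProduct.tmul_smul]
    match_scalars <;> field_simp <;>
      first | ring1 | linear_combination hdet | linear_combination -hdet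

lemma main_concl (hV : finrank K V = 2) (S : Submodule K (V ⊗[K] V))
    (hS : finrank K S = 2) : Concl K V S := by
  -- a basis of V
  set e : Basis (Fin 2) K V := Module.finBasisOfFinrankEq K V hV with he
  have hE : LinearIndependent K ![e 0, e 1] := by
    have h1 : ![e 0, e 1] = ⇑e := by
      funext i; fin_cases i <;> rfl
    rw [h1]; exact e.linearIndependent
  -- generators of S
  obtain ⟨A, B, hsp0⟩ : ∃ A B : V ⊗[K] V, S = Submodule.span K {A, B} := by
    set bS : Basis (Fin 2) K S := Module.finBasisOfFinrankEq K S hS with hbS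
    refine ⟨bS 0, bS 1, le_antisymm ?_ ?_⟩
    · intro v hv
      have h2 := bS.sum_repr ⟨v, hv⟩
      rw [Fin.sum_univ_two] at h2
      have h3 := congrArg (Subtype.val) h2
      push_cast at h3
      exact Submodule.mem_span_pair.2 ⟨_, _, h3⟩
    · rw [Submodule.span_le]
      rintro z (rfl | rfl)
      · exact (bS 0).2
      · exact (bS 1).2
  obtain ⟨a, b, c, d, hA⟩ := tensor_decomp hV (e 0) (e 1) hE A
  obtain ⟨a', b', c', d', hB⟩ := tensor_decomp hV (e 0) (e 1) hE B
  -- find a rank-one-or-zero element spanning S with some partner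
  have key : ∃ A₀ B₀ : V ⊗[K] V, ∃ a₀ b₀ c₀ d₀ : K,
      S = Submodule.span K {A₀, B₀} ∧
      A₀ = a₀ • (e 0 ⊗ₜ[K] e 0) + b₀ • (e 0 ⊗ₜ[K] e 1) + c₀ • (e 1 ⊗ₜ[K] e 0) +
        d₀ • (e 1 ⊗ₜ[K] e 1) ∧ a₀ * d₀ = b₀ * c₀ := by
    by_cases hP : a * d - b * c = 0
    · exact ⟨A, B, a, b, c, d, hsp0, hA, by linear_combination hP⟩
    · obtain ⟨s, hs⟩ := quad_root (a*d - b*c) (a*d' + a'*d - b*c' - b'*c) (a'*d' - b'*c') hP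
      refine ⟨s • A + B, A, s*a + a', s*b + b', s*c + c', s*d + d', ?_, ?_, ?_⟩
      · rw [hsp0]
        exact span_pair_change _ _ _ _ s 1 1 0 (by module) (by module) (by norm_num)
      · rw [hA, hB]; match_scalars <;> ring
      · linear_combination hs
  obtain ⟨A₀, B₀, a₀, b₀, c₀, d₀, hsp, hA₀, hdet⟩ := key
  rcases rank_one_factor (e 0) (e 1) a₀ b₀ c₀ d₀ hdet A₀ hA₀ with
    ⟨p, q, r, s, hpq, hrs, hfac⟩ | hzero
  · by_cases hdep : p * s - q * r = 0
    · -- u and w dependent : a square lies in S, case A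
      rcases hpq with hp | hq
      · have hr : r ≠ 0 := by
          intro hr0
          rcases hrs with h' | h'
          · exact h' hr0
          · apply h'
            have : p * s = 0 := by rw [hr0] at hdep; linear_combination hdep
            rcases mul_eq_zero.mp this with h'' | h''
            · exact absurd h'' hp
            · exact h''
        have hfac' : A₀ = (r/p) • ((p • e 0 + q • e 1) ⊗ₜ[K] (p • e 0 + q • e 1)) := by
          rw [hfac]
          simp only [TensorProduct.add_tmul, TensorProduct.tmul_add, TensorProduct.smul_tmul,
            TensorProduct.tmul_smul]
          match_scalars <;> field_simp <;>
            first
              | ring1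
              | linear_combination p*hdep
              | linear_combination -p*hdep
              | linear_combination q*hdep
              | linear_combination -q*hdep
              | linear_combination (p+q)*hdep
              | linear_combination -(p+q)*hdep
              | linear_combination r*hdep
              | linear_combination -r*hdep
              | linear_combination s*hdep
              | linear_combination -s*hdep
              | linear_combination (r+s)*hdep
              | linear_combination -(r+s)*hdep
              | linear_combination hdep
              | linear_combination -hdep
        have hpair : LinearIndependent K ![e 1, p • e 0 + q • e 1] := by
          have := indep_combo (e 0) (e 1) hE 0 1 p q
            (by intro h; apply hp; linear_combination -h)
          simpa using this
        refine caseA hV (e 1) (p • e 0 + q • e 1) hpair B₀ S ?_ hS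
        rw [hsp]
        refine span_pair_change _ _ _ _ (p/r) 0 0 1 ?_ (by module)
          (by have := div_ne_zero hp hr; intro h; apply this; linear_combination h)
        rw [hfac']
        match_scalars <;> field_simp
      · -- symmetric case q ≠ 0
        have hs0 : s ≠ 0 := by
          intro hs0'
          rcases hrs with h' | h'
          · apply h'
            have : q * r = 0 := by rw [hs0'] at hdep; linear_combination -hdep
            rcases mul_eq_zero.mp this with h'' | h''
            · exact absurd h'' hq
            · exact h''
          · exact h' hs0'
        have hfac' : A₀ = (s/q) • ((p • e 0 + q • e 1) ⊗ₜ[K] (p • e 0 + q • e 1)) := by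
          rw [hfac]
          simp only [TensorProduct.add_tmul, TensorProduct.tmul_add, TensorProduct.smul_tmul,
            TensorProduct.tmul_smul]
          match_scalars <;> field_simp <;>
            first
              | ring1
              | linear_combination p*hdep
              | linear_combination -p*hdep
              | linear_combination q*hdep
              | linear_combination -q*hdep
              | linear_combination (p+q)*hdep
              | linear_combination -(p+q)*hdep
              | linear_combination r*hdep
              | linear_combination -r*hdep
              | linear_combination s*hdep
              | linear_combination -s*hdep
              | linear_combination (r+s)*hdep
              | linear_combination -(r+s)*hdep
              | linear_combination hdep
              | linear_combination -hdep
        have hpair : LinearIndependent K ![e 0, p • e 0 + q • e 1] := by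
          have := indep_combo (e 0) (e 1) hE 1 0 p q
            (by intro h; apply hq; linear_combination h)
          simpa using this
        refine caseA hV (e 0) (p • e 0 + q • e 1) hpair B₀ S ?_ hS
        rw [hsp]
        refine span_pair_change _ _ _ _ (q/s) 0 0 1 ?_ (by module)
          (by have := div_ne_zero hq hs0; intro h; apply this; linear_combination h)
        rw [hfac']
        match_scalars <;> field_simp
    · -- independent factors : case B
      have hpair : LinearIndependent K ![r • e 0 + s • e 1, p • e 0 + q • e 1] := by
        refine indep_combo (e 0) (e 1) hE r s p q ?_
        intro h; apply hdep; linear_combination -h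
      refine caseB hV (r • e 0 + s • e 1) (p • e 0 + q • e 1) hpair B₀ S ?_ hS
      rw [hsp, hfac]
  · -- A₀ = 0 contradicts finrank S = 2
    exfalso
    have hindep := indep_of_span_finrank A₀ B₀ S hsp hS
    rw [Fintype.linearIndependent_iff] at hindep
    have := hindep ![1, 0] (by
      rw [Fin.sum_univ_two]
      simp only [Matrix.cons_val_zero, Matrix.cons_val_one, Matrix.head_cons]
      rw [hzero]; module) 0
    simp at this

end glue

/-- Canonical forms of 2-dimensional subspaces of `V ⊗ V` for
`dim V = 2` over an algebraically closed field. -/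
theorem stmt6 (K : Type*) [Field K] [IsAlgClosed K] (V : Type*) [AddCommGroup V]
    [Module K V] [FiniteDimensional K V] (hV : finrank K V = 2)
    (S : Submodule K (V ⊗[K] V)) (hS : finrank K S = 2) :
    ∃ x y : V, LinearIndependent K ![x, y] ∧
      (S = Submodule.span K {x ⊗ₜ[K] x, y ⊗ₜ[K] y} ∨
       S = Submodule.span K {x ⊗ₜ[K] x - y ⊗ₜ[K] x, y ⊗ₜ[K] y} ∨
       S = Submodule.span K {x ⊗ₜ[K] y, y ⊗ₜ[K] y} ∨
       S = Submodule.span K {y ⊗ₜ[K] x, y ⊗ₜ[K] y} ∨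
       (∃ α : K, α ≠ 0 ∧
         S = Submodule.span K {x ⊗ₜ[K] y - α • (y ⊗ₜ[K] x), y ⊗ₜ[K] y}) ∨
       S = Submodule.span K {x ⊗ₜ[K] y, y ⊗ₜ[K] x} ∨
       S = Submodule.span K {x ⊗ₜ[K] x - x ⊗ₜ[K] y, y ⊗ₜ[K] x} ∨
       (∃ a : K, a ^ 2 + 1 ≠ 0 ∧
         S = Submodule.span K {x ⊗ₜ[K] x - a • (x ⊗ₜ[K] y) - y ⊗ₜ[K] y, y ⊗ₜ[K] x})) := by
  exact main_concl hV S hS
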